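/- Let T₁, …, T_d, X₁, …, X_g be bounded operators on H with each Xⱼ self-adjoint and Σᵢ TᵢTᵢ* + Σⱼ Xⱼ² ≤ I, and suppose there exist operators B₁, …, B_d, not all zero, with Σᵢ Tᵢ Bᵢ* = 0 and Σᵢ BᵢBᵢ* ≤ I. Then the block tuple Sᵢ = [[Tᵢ, 0],[Bᵢ, 0]], Yⱼ = [[Xⱼ, 0],[0, 0]] on H ⊕ H satisfies Σᵢ SᵢSᵢ* + Σⱼ Yⱼ² ≤ I, each Yⱼ is self-adjoint, and the dilation is nontrivial (some Bᵢ ≠ 0). -/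

import Mathlib

open ContinuousLinearMap

variable {H : Type*} [NormedAddCommGroup H] [InnerProductSpace ℂ H]

/-- The block operator `[[A, B], [C, D]]` on the Hilbert space direct sum `H ⊕ H`. -/
noncomputable def blockOp (A B C D : H →L[ℂ] H) :
    WithLp 2 (H × H) →L[ℂ] WithLp 2 (H × H) :=
  ((WithLp.prodContinuousLinearEquiv 2 ℂ H H).symm : H × H →L[ℂ] WithLp 2 (H × H)) ∘L
    ((A ∘L ContinuousLinearMap.fst ℂ H H + B ∘L ContinuousLinearMap.snd ℂ H H).prod
      (C ∘L ContinuousLinearMap.fst ℂ H H + D ∘L ContinuousLinearMap.snd ℂ H H)) ∘L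
    ((WithLp.prodContinuousLinearEquiv 2 ℂ H H : WithLp 2 (H × H) ≃L[ℂ] H × H) :
      WithLp 2 (H × H) →L[ℂ] H × H)

lemma blockOp_fst (A B C D : H →L[ℂ] H) (x : WithLp 2 (H × H)) :
    (blockOp A B C D x).fst = A x.fst + B x.snd := rfl

lemma blockOp_snd (A B C D : H →L[ℂ] H) (x : WithLp 2 (H × H)) :
    (blockOp A B C D x).snd = C x.fst + D x.snd := rfl

lemma blockOp_ext {P Q : WithLp 2 (H × H) →L[ℂ] WithLp 2 (H × H)}
    (h1 : ∀ x, (P x).fst = (Q x).fst) (h2 : ∀ x, (P x).snd = (Q x).snd) : P = Q := by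
  ext x
  exact (WithLp.prodContinuousLinearEquiv 2 ℂ H H).injective (Prod.ext (h1 x) (h2 x))

lemma adjoint_blockOp [CompleteSpace H] (A B C D : H →L[ℂ] H) :
    adjoint (blockOp A B C D) = blockOp (adjoint A) (adjoint C) (adjoint B) (adjoint D) := by
  symm
  rw [eq_adjoint_iff]
  intro x y
  simp only [WithLp.prod_inner_apply, WithLp.ofLp_fst, WithLp.ofLp_snd, blockOp_fst, blockOp_snd, inner_add_left, inner_add_right,
    adjoint_inner_left]
  ring

lemma blockOp_comp (A B C D A' B' C' D' : H →L[ℂ] H) :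
    blockOp A B C D ∘L blockOp A' B' C' D' =
      blockOp (A ∘L A' + B ∘L C') (A ∘L B' + B ∘L D')
        (C ∘L A' + D ∘L C') (C ∘L B' + D ∘L D') := by
  apply blockOp_ext <;> intro x <;>
    simp [blockOp_fst, blockOp_snd, map_add] <;> abel

lemma withLp_sum_fst {n : ℕ} (f : Fin n → WithLp 2 (H × H)) :
    (∑ i, f i).fst = ∑ i, (f i).fst :=
  map_sum ((LinearMap.fst ℂ H H).comp (WithLp.linearEquiv 2 ℂ (H × H)).toLinearMap) f Finset.univ

lemma withLp_sum_snd {n : ℕ} (f : Fin n → WithLp 2 (H × H)) :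
    (∑ i, f i).snd = ∑ i, (f i).snd :=
  map_sum ((LinearMap.snd ℂ H H).comp (WithLp.linearEquiv 2 ℂ (H × H)).toLinearMap) f Finset.univ

lemma blockOp_sum {n : ℕ} (A B C D : Fin n → H →L[ℂ] H) :
    ∑ i, blockOp (A i) (B i) (C i) (D i) =
      blockOp (∑ i, A i) (∑ i, B i) (∑ i, C i) (∑ i, D i) := by
  apply blockOp_ext <;> intro x <;>
    simp [sum_apply, blockOp_fst, blockOp_snd, Finset.sum_add_distrib,
      withLp_sum_fst, withLp_sum_snd]

lemma blockOp_one : (1 : WithLp 2 (H × H) →L[ℂ] WithLp 2 (H × H)) = blockOp 1 0 0 1 := by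
  apply blockOp_ext <;> intro x <;> simp [blockOp_fst, blockOp_snd]

lemma blockOp_sub (A B C D A' B' C' D' : H →L[ℂ] H) :
    blockOp A B C D - blockOp A' B' C' D' =
      blockOp (A - A') (B - B') (C - C') (D - D') := by
  apply blockOp_ext <;> intro x <;>
    simp [blockOp_fst, blockOp_snd] <;> abel

lemma blockOp_add (A B C D A' B' C' D' : H →L[ℂ] H) :
    blockOp A B C D + blockOp A' B' C' D' =
      blockOp (A + A') (B + B') (C + C') (D + D') := by
  apply blockOp_ext <;> intro x <;>
    simp [blockOp_fst, blockOp_snd] <;> abel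

lemma blockOp_isPositive [CompleteSpace H] {P Q : H →L[ℂ] H}
    (hP : P.IsPositive) (hQ : Q.IsPositive) :
    (blockOp P 0 0 Q).IsPositive := by
  constructor
  · rw [← isSelfAdjoint_iff_isSymmetric, isSelfAdjoint_iff', adjoint_blockOp,
      show adjoint (0 : H →L[ℂ] H) = 0 by simp [← star_eq_adjoint], hP.isSelfAdjoint.adjoint_eq,
      hQ.isSelfAdjoint.adjoint_eq]
  · intro x
    have h1 := hP.inner_nonneg_left x.fst
    have h2 := hQ.inner_nonneg_left x.snd
    simp only [reApplyInnerSelf, WithLp.prod_inner_apply, WithLp.ofLp_fst, WithLp.ofLp_snd, blockOp_fst, blockOp_snd,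
      zero_apply, add_zero, zero_add, map_add]
    exact add_nonneg (Complex.nonneg_iff.mp h1).1 (Complex.nonneg_iff.mp h2).1

/-- Theorem 2.8 ('only if', conditions (2)/(3)): a nontrivial solution of
`∑ Tᵢ Bᵢ* = 0` with `∑ Bᵢ Bᵢ* ≤ I` yields a nontrivial dilation inside `D^{d,g}`. -/
theorem stmt_5 [CompleteSpace H] (d g : ℕ)
    (T : Fin d → H →L[ℂ] H) (X : Fin g → H →L[ℂ] H)
    (hXsa : ∀ j, IsSelfAdjoint (X j))
    (hcontr : (1 - (∑ i, (T i) ∘L adjoint (T i) + ∑ j, (X j) ∘L (X j))).IsPositive)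
    (B : Fin d → H →L[ℂ] H) (hBne : ∃ i, B i ≠ 0)
    (hTB : ∑ i, (T i) ∘L adjoint (B i) = 0)
    (hBB : (1 - ∑ i, (B i) ∘L adjoint (B i)).IsPositive)
    (S : Fin d → WithLp 2 (H × H) →L[ℂ] WithLp 2 (H × H))
    (Y : Fin g → WithLp 2 (H × H) →L[ℂ] WithLp 2 (H × H))
    (hS : ∀ i, S i = blockOp (T i) 0 (B i) 0)
    (hY : ∀ j, Y j = blockOp (X j) 0 0 0) :
    (1 - (∑ i, (S i) ∘L adjoint (S i) + ∑ j, (Y j) ∘L (Y j))).IsPositive ∧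
      (∀ j, IsSelfAdjoint (Y j)) ∧ (∃ i, B i ≠ 0) := by
  have hadj0 : adjoint (0 : H →L[ℂ] H) = 0 := by simp [← star_eq_adjoint]
  refine ⟨?_, ?_, hBne⟩
  · have hBT : ∑ i, (B i) ∘L adjoint (T i) = 0 := by
      have h := congrArg star hTB
      rw [star_sum] at h
      simp only [star_eq_adjoint, adjoint_comp, adjoint_adjoint, star_zero] at h
      exact h
    have h1 : ∑ i, S i ∘L adjoint (S i) =
        blockOp (∑ i, T i ∘L adjoint (T i)) 0 0 (∑ i, B i ∘L adjoint (B i)) := by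
      have key : ∀ i, S i ∘L adjoint (S i) =
          blockOp (T i ∘L adjoint (T i)) (T i ∘L adjoint (B i))
            (B i ∘L adjoint (T i)) (B i ∘L adjoint (B i)) := by
        intro i
        rw [hS, adjoint_blockOp, blockOp_comp]
        simp [hadj0]
      rw [Finset.sum_congr rfl (fun i _ => key i), blockOp_sum, hTB, hBT]
    have h2 : ∑ j, Y j ∘L Y j = blockOp (∑ j, X j ∘L X j) 0 0 0 := by
      have key : ∀ j, Y j ∘L Y j = blockOp (X j ∘L X j) 0 0 0 := by
        intro j
        rw [hY, blockOp_comp]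
        simp
      rw [Finset.sum_congr rfl (fun j _ => key j), blockOp_sum]
      simp
    have hfinal : 1 - (∑ i, S i ∘L adjoint (S i) + ∑ j, Y j ∘L Y j) =
        blockOp (1 - (∑ i, T i ∘L adjoint (T i) + ∑ j, X j ∘L X j)) 0 0
          (1 - ∑ i, B i ∘L adjoint (B i)) := by
      rw [h1, h2, blockOp_add, blockOp_one, blockOp_sub]
      congr 1 <;> simp
    rw [hfinal]
    exact blockOp_isPositive hcontr hBB
  · intro j
    rw [isSelfAdjoint_iff', hY, adjoint_blockOp, hadj0, (hXsa j).adjoint_eq]
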